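/- In a two-player zero-sum-like game where the defender chooses 'direct' with probability p and 'indirect' with probability 1−p, and payoffs to the defender are: U(direct vs attacker-direct) = −H − 1, U(direct vs attacker-indirect) = −1, U(indirect vs attacker-direct) = −H(k−1)/(n−2) − 2, U(indirect vs attacker-indirect) = −H·k/(n−2) − 2, the defender's probability p = 1/(n−1) makes the attacker indifferent between his two pure strategies, assuming H > 0 and n ≥ 3. -/
import Mathlib


/-- The defender's mixed strategy `p = 1/(n-1)` makes the attacker indifferent between
his two pure strategies: the attacker's expected payoff for playing `direct`
(namely `p(H - Ik) + (1-p)(H(k-1)/(n-2) - Ik)`) equals his expected payoff for playing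
`indirect` (namely `p(-Ik) + (1-p)(Hk/(n-2) - Ik)`). -/
theorem defender_mix_makes_attacker_indifferent
    (n : ℕ) (hn : 3 ≤ n) (k : ℕ) (hk : 1 ≤ k) (hkn : k ≤ n - 2)
    (H I : ℝ) (hH : 0 < H) (p : ℝ) (hp : p = 1 / ((n : ℝ) - 1)) :
    p * (H - I * k) + (1 - p) * (H * ((k : ℝ) - 1) / ((n : ℝ) - 2) - I * k) =
      p * (-(I * k)) + (1 - p) * (H * (k : ℝ) / ((n : ℝ) - 2) - I * k) := by
  have hn3 : (3 : ℝ) ≤ (n : ℝ) := by exact_mod_cast hn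
  have h1 : (n : ℝ) - 1 ≠ 0 := by linarith
  have h2 : (n : ℝ) - 2 ≠ 0 := by linarith
  subst hp
  field_simp
  ring
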